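/- Let B be an L×L real positive definite matrix with maximum eigenvalue λ_M and minimum eigenvalue λ_m > 0. Then for all x, y ∈ ℝ^L with ⟨x, y⟩ = 0, we have |xᵀBy|² ≤ ((λ_M − λ_m)/(λ_M + λ_m))² (xᵀBx)(yᵀBy). -/
import Mathlib


open Matrix

set_option maxHeartbeats 1000000 in
/-- Wielandt's inequality: for a positive definite matrix `B` with smallest and
largest eigenvalues `lamm`, `lamM` (characterized by Rayleigh-quotient bounds),
and orthogonal vectors `x`, `y`,
`|xᵀBy|² ≤ ((λ_M − λ_m)/(λ_M + λ_m))² (xᵀBx)(yᵀBy)`. -/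
theorem wielandt_inequality (L : ℕ) (B : Matrix (Fin L) (Fin L) ℝ)
    (hB : B.PosDef) (lamM lamm : ℝ) (hm : 0 < lamm)
    (hlo : ∀ x : Fin L → ℝ, lamm * (x ⬝ᵥ x) ≤ x ⬝ᵥ B *ᵥ x)
    (hhi : ∀ x : Fin L → ℝ, x ⬝ᵥ B *ᵥ x ≤ lamM * (x ⬝ᵥ x))
    (x y : Fin L → ℝ) (hxy : x ⬝ᵥ y = 0) :
    (x ⬝ᵥ B *ᵥ y) ^ 2 ≤
      ((lamM - lamm) / (lamM + lamm)) ^ 2 * ((x ⬝ᵥ B *ᵥ x) * (y ⬝ᵥ B *ᵥ y)) := by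
  have hsym : ∀ u v : Fin L → ℝ, u ⬝ᵥ B *ᵥ v = v ⬝ᵥ B *ᵥ u := by
    have hBt : Bᵀ = B := by
      simpa [Matrix.conjTranspose_eq_transpose_of_trivial] using hB.isHermitian.eq
    intro u v
    rw [Matrix.dotProduct_mulVec, dotProduct_comm, ← Matrix.mulVec_transpose, hBt]
  by_cases hx : x = 0
  · subst hx; simp
  by_cases hy : y = 0
  · subst hy; simp
  set a := x ⬝ᵥ B *ᵥ x with ha_def
  set b := y ⬝ᵥ B *ᵥ y with hb_def
  set c := x ⬝ᵥ B *ᵥ y with hc_def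
  set p := x ⬝ᵥ x with hp_def
  set q := y ⬝ᵥ y with hq_def
  have hyx : y ⬝ᵥ x = 0 := by rw [dotProduct_comm]; exact hxy
  have hcyx : y ⬝ᵥ B *ᵥ x = c := hsym y x
  have ha : 0 < a := hB.re_dotProduct_pos hx
  have hb : 0 < b := hB.re_dotProduct_pos hy
  have hp0 : 0 ≤ p := by
    rw [hp_def]; exact Finset.sum_nonneg fun i _ => mul_self_nonneg _
  have hq0 : 0 ≤ q := by
    rw [hq_def]; exact Finset.sum_nonneg fun i _ => mul_self_nonneg _
  have hp : 0 < p := by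
    rcases lt_or_eq_of_le hp0 with h | h
    · exact h
    · exfalso; have := hhi x; rw [← hp_def, ← h] at this; simp at this; linarith
  have hML : lamm ≤ lamM := by
    have h1 := hlo x
    have h2 := hhi x
    rw [← hp_def, ← ha_def] at h1 h2
    nlinarith
  have hK : 0 < lamM + lamm := by linarith
  -- expansions
  have expandB : ∀ s t : ℝ, (s • x + t • y) ⬝ᵥ B *ᵥ (s • x + t • y)
      = s ^ 2 * a + 2 * (s * t) * c + t ^ 2 * b := by
    intro s t
    simp only [Matrix.mulVec_add, Matrix.mulVec_smul, dotProduct_add, add_dotProduct,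
      dotProduct_smul, smul_dotProduct, smul_eq_mul, hcyx, ← ha_def, ← hb_def, ← hc_def]
    ring
  have expandE : ∀ s t : ℝ, (s • x + t • y) ⬝ᵥ (s • x + t • y)
      = s ^ 2 * p + t ^ 2 * q := by
    intro s t
    simp only [dotProduct_add, add_dotProduct, dotProduct_smul, smul_dotProduct,
      smul_eq_mul, hxy, hyx, ← hp_def, ← hq_def]
    ring
  set α := Real.sqrt a with hα_def
  set β := Real.sqrt b with hβ_def
  have hα : α ^ 2 = a := Real.sq_sqrt ha.le
  have hβ : β ^ 2 = b := Real.sq_sqrt hb.le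
  have hα0 : 0 ≤ α := Real.sqrt_nonneg a
  have hβ0 : 0 ≤ β := Real.sqrt_nonneg b
  have E1 := hhi (β • x + α • y)
  have lo1 := hlo (β • x + α • y)
  have E2 := hhi (β • x + (-α) • y)
  have lo2 := hlo (β • x + (-α) • y)
  rw [expandB, expandE] at E1 lo1 E2 lo2
  rw [show ((-α) ^ 2 : ℝ) = α ^ 2 from by ring,
    show (β * -α : ℝ) = -(β * α) from by ring] at E2 lo2
  rw [hα, hβ] at E1 lo1 E2 lo2
  have key1 : (β * α) * c * (lamM + lamm) ≤ (a * b) * (lamM - lamm) := by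
    nlinarith [mul_le_mul_of_nonneg_left E1 hm.le,
      mul_le_mul_of_nonneg_left lo2 (le_trans hm.le hML)]
  have key2 : -((β * α) * c * (lamM + lamm)) ≤ (a * b) * (lamM - lamm) := by
    nlinarith [mul_le_mul_of_nonneg_left E2 hm.le,
      mul_le_mul_of_nonneg_left lo1 (le_trans hm.le hML)]
  set t := β * α with ht_def
  have ht2 : t ^ 2 = a * b := by rw [ht_def]; rw [mul_pow, hα, hβ]; ring
  have h1 : 0 ≤ (a * b) * (lamM - lamm) - t * c * (lamM + lamm) := by linarith
  have h2 : 0 ≤ (a * b) * (lamM - lamm) + t * c * (lamM + lamm) := by linarith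
  have hprod := mul_nonneg h1 h2
  have hsq : t ^ 2 * c ^ 2 * (lamM + lamm) ^ 2 = a * b * c ^ 2 * (lamM + lamm) ^ 2 := by
    rw [ht2]
  rw [div_pow, div_mul_eq_mul_div, le_div_iff₀ (by positivity)]
  nlinarith [hprod, hsq, mul_pos ha hb, sq_nonneg ((lamM + lamm) * c)]
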